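/- Let G be a group, let K ⊆ G be a finite subset with e ∈ K, and let F₀, F₁ ⊆ G be finite subsets. Then |KF₁ \ F₁| ≤ |KF₀ \ F₀| + |K| · |F₀ △ F₁|. -/
import Mathlib


open Pointwise

/-- Let `G` be a group, `K ⊆ G` finite with `e ∈ K`, and `F₀, F₁ ⊆ G` finite.
Then `|KF₁ \ F₁| ≤ |KF₀ \ F₀| + |K| · |F₀ △ F₁|`. -/
theorem card_mul_sdiff_le {G : Type*} [Group G] [DecidableEq G]
    (K F₀ F₁ : Finset G) (hK : (1 : G) ∈ K) :
    ((K * F₁) \ F₁).card ≤ ((K * F₀) \ F₀).card + K.card * (symmDiff F₀ F₁).card := by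
  have hsub : (K * F₁) \ F₁ ⊆ ((K * F₀) \ F₀) ∪ (F₀ \ F₁) ∪ K * (F₁ \ F₀) := by
    intro x hx
    obtain ⟨hx1, hx2⟩ := Finset.mem_sdiff.1 hx
    rw [Finset.mem_mul] at hx1
    obtain ⟨k, hk, f, hf, rfl⟩ := hx1
    rw [Finset.mem_union, Finset.mem_union]
    by_cases hfF₀ : f ∈ F₀
    · by_cases hF₀ : k * f ∈ F₀
      · exact Or.inl (Or.inr (Finset.mem_sdiff.2 ⟨hF₀, hx2⟩))
      · exact Or.inl (Or.inl (Finset.mem_sdiff.2 ⟨Finset.mul_mem_mul hk hfF₀, hF₀⟩))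
    · exact Or.inr (Finset.mul_mem_mul hk (Finset.mem_sdiff.2 ⟨hf, hfF₀⟩))
  have h1 : (K * (F₁ \ F₀)).card ≤ K.card * (F₁ \ F₀).card := Finset.card_mul_le
  have hK1 : 1 ≤ K.card := Finset.card_pos.2 ⟨1, hK⟩
  have hsd : (symmDiff F₀ F₁).card = (F₀ \ F₁).card + (F₁ \ F₀).card := by
    rw [symmDiff_def]
    exact Finset.card_union_of_disjoint (disjoint_sdiff_sdiff)
  calc ((K * F₁) \ F₁).card ≤ (((K * F₀) \ F₀) ∪ (F₀ \ F₁) ∪ K * (F₁ \ F₀)).card :=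
        Finset.card_le_card hsub
    _ ≤ (((K * F₀) \ F₀) ∪ (F₀ \ F₁)).card + (K * (F₁ \ F₀)).card :=
        Finset.card_union_le _ _
    _ ≤ (((K * F₀) \ F₀).card + (F₀ \ F₁).card) + (K * (F₁ \ F₀)).card := by
        gcongr
        exact Finset.card_union_le _ _
    _ ≤ ((K * F₀) \ F₀).card + K.card * (symmDiff F₀ F₁).card := by
        rw [hsd]
        nlinarith
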